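/- Let H = {h_1,...,h_m} be homogeneous polynomials in R' = K[x_1,...,x_n,y] such that R'/⟨H, y⟩ is Artinian with D := d_reg(⟨H^top⟩) < ∞, where H^top = H|_{y=0}, and such that D' := the generalized degree of regularity of ⟨H⟩ is finite. If D' ≥ D, then every element of the reduced Gröbner basis of ⟨H⟩ with respect to any homogenized graded monomial ordering ≺' has degree at most D'. -/

import Mathlib

open MvPolynomial

namespace GBPaper

/-- The dimension of the degree-`d` homogeneous piece of `R/I`,
where `R = K[x_i : i ∈ σ]`. -/
noncomputable def hilbertFn (K : Type*) [Field K] {σ : Type*}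
    (I : Ideal (MvPolynomial σ K)) (d : ℕ) : ℕ :=
  Module.finrank K
    ((MvPolynomial.homogeneousSubmodule σ K d).map
      (Ideal.Quotient.mkₐ K I).toLinearMap)

/-- An ideal is homogeneous iff it contains all homogeneous components of its elements. -/
def IsHomogeneousIdeal {K : Type*} [Field K] {σ : Type*}
    (I : Ideal (MvPolynomial σ K)) : Prop :=
  ∀ f ∈ I, ∀ d : ℕ, MvPolynomial.homogeneousComponent d f ∈ I

/-- The degree of regularity: the least `d` with `R_d = I_d`. -/
noncomputable def degReg (K : Type*) [Field K] {σ : Type*}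
    (I : Ideal (MvPolynomial σ K)) : ℕ :=
  sInf {d : ℕ | ∀ f : MvPolynomial σ K, f.IsHomogeneous d → f ∈ I}

/-- The generalized degree of regularity: the least `d₀` from which on the Hilbert
function of `R/I` is constant. -/
noncomputable def gdegReg (K : Type*) [Field K] {σ : Type*}
    (I : Ideal (MvPolynomial σ K)) : ℕ :=
  sInf {d₀ : ℕ | ∀ d : ℕ, d₀ ≤ d → hilbertFn K I d = hilbertFn K I d₀}

/-- The leading monomial (leading exponent) of a polynomial with respect to a
monomial order. -/
noncomputable def lm {K : Type*} [Field K] {σ : Type*} (m : MonomialOrder σ)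
    (f : MvPolynomial σ K) : σ →₀ ℕ :=
  m.toSyn.symm (f.support.sup fun s => m.toSyn s)

/-- A monomial order is graded (degree-compatible) if it refines total degree. -/
def MonIsGraded {σ : Type*} (m : MonomialOrder σ) : Prop :=
  ∀ a b : σ →₀ ℕ, a.degree < b.degree → m.toSyn a < m.toSyn b

/-- `G` is the reduced Gröbner basis of `I` with respect to the monomial order `m`. -/
structure IsReducedGB {K : Type*} [Field K] {σ : Type*} (m : MonomialOrder σ)
    (I : Ideal (MvPolynomial σ K)) (G : Finset (MvPolynomial σ K)) : Prop where
  subset : (G : Set (MvPolynomial σ K)) ⊆ I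
  zero_not_mem : (0 : MvPolynomial σ K) ∉ G
  monic : ∀ g ∈ G, MvPolynomial.coeff (lm m g) g = 1
  isGB : ∀ f ∈ I, f ≠ 0 → ∃ g ∈ G, lm m g ≤ lm m f
  reduced : ∀ g ∈ G, ∀ g' ∈ G, g ≠ g' → ∀ s ∈ g.support, ¬ lm m g' ≤ s

/-- The degree reverse lexicographic order with `x_0 ≻ x_1 ≻ ⋯`. -/
def IsDegRevLex {n : ℕ} (m : MonomialOrder (Fin n)) : Prop :=
  ∀ a b : Fin n →₀ ℕ, m.toSyn a < m.toSyn b ↔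
    (a.degree < b.degree ∨
      (a.degree = b.degree ∧ ∃ i, b i < a i ∧ ∀ j, i < j → a j = b j))

/-- Restriction of an exponent vector on `n+1` variables to the first `n` variables. -/
noncomputable def restr {n : ℕ} (a : Fin (n + 1) →₀ ℕ) : Fin n →₀ ℕ :=
  Finsupp.equivFunOnFinite.symm fun i => a i.castSucc

/-- Extension of an exponent vector on `n` variables to `n+1` variables (with
`y`-exponent `0`). -/
noncomputable def extX {n : ℕ} (a : Fin n →₀ ℕ) : Fin (n + 1) →₀ ℕ :=
  Finsupp.embDomain Fin.castSuccEmb a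

/-- `m'` is the homogenization (w.r.t. the last variable `y`) of the graded
monomial order `m₀`: it compares first total degrees, then the `X`-parts using `m₀`. -/
def IsHomogenizationOrder {n : ℕ} (m' : MonomialOrder (Fin (n + 1)))
    (m₀ : MonomialOrder (Fin n)) : Prop :=
  ∀ a b : Fin (n + 1) →₀ ℕ, m'.toSyn a < m'.toSyn b ↔
    (a.degree < b.degree ∨
      (a.degree = b.degree ∧ m₀.toSyn (restr a) < m₀.toSyn (restr b)))

/-- The top part (maximal total degree part) of a polynomial. -/
noncomputable def topPart {K : Type*} [Field K] {σ : Type*}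
    (f : MvPolynomial σ K) : MvPolynomial σ K :=
  MvPolynomial.homogeneousComponent f.totalDegree f

/-- The homogenization of `f ∈ K[x_1,…,x_n]` by the extra (last) variable `y`. -/
noncomputable def homog {K : Type*} [Field K] {n : ℕ}
    (f : MvPolynomial (Fin n) K) : MvPolynomial (Fin (n + 1)) K :=
  ∑ s ∈ f.support,
    MvPolynomial.monomial
      (extX s + Finsupp.single (Fin.last n) (f.totalDegree - s.degree))
      (f.coeff s)

/-- The last variable `y` used for homogenization. -/
noncomputable def yvar (K : Type*) [Field K] (n : ℕ) : MvPolynomial (Fin (n + 1)) K :=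
  MvPolynomial.X (Fin.last n)

/-- Substituting `y = 0`, the "top part" of a homogeneous polynomial in `R[y]`. -/
noncomputable def setYZero {K : Type*} [Field K] {n : ℕ}
    (g : MvPolynomial (Fin (n + 1)) K) : MvPolynomial (Fin (n + 1)) K :=
  MvPolynomial.aeval
    (fun i => if i = Fin.last n then 0 else MvPolynomial.X i) g

/-- The ideal generated by the polynomials `f j` for `j < i`. -/
noncomputable def prevIdeal {K : Type*} [Field K] {σ : Type*} {M : ℕ}
    (f : Fin M → MvPolynomial σ K) (i : Fin M) : Ideal (MvPolynomial σ K) :=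
  Ideal.span (f '' {j | j < i})

/-- `d`-regularity of a sequence of homogeneous polynomials of degrees `dg`. -/
def IsDRegularSeq {K : Type*} [Field K] {σ : Type*} {M : ℕ}
    (f : Fin M → MvPolynomial σ K) (dg : Fin M → ℕ) (d : ℕ) : Prop :=
  ∀ i : Fin M, ∀ g : MvPolynomial σ K, ∀ e : ℕ,
    g.IsHomogeneous e → e + dg i < d →
    g * f i ∈ prevIdeal f i → g ∈ prevIdeal f i

/-- Semi-regularity (Pardue): each multiplication map on graded pieces of the
successive quotients is injective or surjective. -/
def IsSemiRegularSeq {K : Type*} [Field K] {σ : Type*} {M : ℕ}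
    (f : Fin M → MvPolynomial σ K) (dg : Fin M → ℕ) : Prop :=
  ∀ i : Fin M, ∀ t : ℕ, dg i ≤ t →
    (∀ g : MvPolynomial σ K, g.IsHomogeneous (t - dg i) →
        g * f i ∈ prevIdeal f i → g ∈ prevIdeal f i) ∨
    (∀ h : MvPolynomial σ K, h.IsHomogeneous t →
        ∃ g : MvPolynomial σ K, g.IsHomogeneous (t - dg i) ∧
          h - g * f i ∈ prevIdeal f i)

/-- The power series `∏ (1 - z^{d_i}) / (1-z)^n` over `ℤ`. -/
noncomputable def semiRegSeries (n : ℕ) {M : ℕ} (dg : Fin M → ℕ) : PowerSeries ℤ :=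
  (∏ i : Fin M, (1 - (PowerSeries.X : PowerSeries ℤ) ^ dg i)) *
    ((PowerSeries.invOneSubPow ℤ n : (PowerSeries ℤ)ˣ) : PowerSeries ℤ)

/-- The cutoff of the truncation `[·]`: the first index with a nonpositive coefficient. -/
noncomputable def truncCutoff (P : PowerSeries ℤ) : ℕ :=
  sInf {t : ℕ | PowerSeries.coeff t P ≤ 0}

/-- The coefficient of `z^t` in the series `[P]` obtained by truncating `P` after
the last consecutive positive coefficient. -/
noncomputable def truncCoeff (P : PowerSeries ℤ) (t : ℕ) : ℤ :=
  if t < truncCutoff P then PowerSeries.coeff t P else 0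

section Koszul

variable {K : Type*} [Field K] {σ : Type*} {M : ℕ}

/-- Index set of the degree-`i` part of the Koszul complex on `M` polynomials. -/
abbrev KIdx (M i : ℕ) := {s : Finset (Fin M) // s.card = i}

/-- The Koszul differential `K_{i+1} → K_i` of the Koszul complex on `f`. -/
noncomputable def koszulD (f : Fin M → MvPolynomial σ K) (i : ℕ)
    (v : KIdx M (i + 1) → MvPolynomial σ K) :
    KIdx M i → MvPolynomial σ K :=
  fun t => ∑ j : Fin M,
    if h : j ∈ t.val then 0
    else ((-1 : MvPolynomial σ K) ^ (t.val.filter (fun l => l < j)).card) * f j *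
      v ⟨insert j t.val, by rw [Finset.card_insert_of_notMem h, t.prop]⟩

/-- A Koszul `i`-chain is homogeneous of (internal) degree `d`: each component at a
subset `s` is homogeneous of degree `d - ∑_{j ∈ s} dg j` (and zero if `d` is smaller
than this shift). -/
def KChainHom (dg : Fin M → ℕ) (i : ℕ)
    (v : KIdx M i → MvPolynomial σ K) (d : ℕ) : Prop :=
  ∀ t : KIdx M i,
    (v t).IsHomogeneous (d - ∑ j ∈ t.val, dg j) ∧
    (d < ∑ j ∈ t.val, dg j → v t = 0)

/-- A Koszul `i`-cycle: an `i`-chain killed by the Koszul differential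
(every `0`-chain is a cycle). -/
def IsKCycle (f : Fin M → MvPolynomial σ K) :
    (i : ℕ) → (KIdx M i → MvPolynomial σ K) → Prop
  | 0, _ => True
  | (i + 1), v => koszulD f i v = 0

/-- The degree-`d` part of the `i`-th Koszul homology of `f` vanishes:
every homogeneous cycle of degree `d` is a boundary. -/
def KoszulHVanish (f : Fin M → MvPolynomial σ K) (dg : Fin M → ℕ)
    (i d : ℕ) : Prop :=
  ∀ v : KIdx M i → MvPolynomial σ K, KChainHom dg i v d → IsKCycle f i v →
    ∃ w : KIdx M (i + 1) → MvPolynomial σ K, koszulD f i w = v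

/-- The sum `∑ v_j f_j` of which syzygies are the kernel. -/
noncomputable def syzSum (f v : Fin M → MvPolynomial σ K) : MvPolynomial σ K :=
  ∑ j : Fin M, v j * f j

/-- The module of trivial (Koszul) syzygies of `f`. -/
noncomputable def trivSyz (f : Fin M → MvPolynomial σ K) :
    Submodule (MvPolynomial σ K) (Fin M → MvPolynomial σ K) :=
  Submodule.span (MvPolynomial σ K)
    {w | ∃ i j : Fin M, i < j ∧ w = Pi.single j (f i) - Pi.single i (f j)}

/-- A tuple `v` is homogeneous of degree `e` as an element of `⊕ R(-dg j)`. -/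
def TupleHom (dg : Fin M → ℕ) (v : Fin M → MvPolynomial σ K) (e : ℕ) : Prop :=
  ∀ j : Fin M, (v j).IsHomogeneous (e - dg j) ∧ (e < dg j → v j = 0)

end Koszul

end GBPaper

namespace GBPaper

/-- The top part `h|_{y=0}` of a homogeneous polynomial in `R' = R[y]`,
viewed as an element of `R = K[x_1,…,x_n]`. -/
noncomputable def topPartR {K : Type*} [Field K] {n : ℕ}
    (g : MvPolynomial (Fin (n + 1)) K) : MvPolynomial (Fin n) K :=
  MvPolynomial.aeval (Fin.lastCases 0 fun i => MvPolynomial.X i) g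

end GBPaper

namespace GBPaper

section Aux

variable {K : Type*} [Field K]

/-! ### Degree helpers -/

theorem deg_add {σ : Type*} (a b : σ →₀ ℕ) : (a + b).degree = a.degree + b.degree := by
  simp only [Finsupp.degree_eq_weight_one, map_add]

theorem deg_single {σ : Type*} (i : σ) (k : ℕ) : (Finsupp.single i k).degree = k := by
  classical
  rcases eq_or_ne k 0 with rfl | hk
  · simp [Finsupp.degree]
  · rw [Finsupp.degree_apply, Finsupp.support_single_ne_zero _ hk, Finset.sum_singleton,
      Finsupp.single_eq_same]

theorem deg_mono {σ : Type*} {a b : σ →₀ ℕ} (hab : a ≤ b) : a.degree ≤ b.degree := by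
  have h := add_tsub_cancel_of_le hab
  calc a.degree ≤ a.degree + (b - a).degree := le_self_add
  _ = b.degree := by rw [← deg_add, h]

theorem isHomog_iff {σ : Type*} {f : MvPolynomial σ K} {d : ℕ} :
    f.IsHomogeneous d ↔ ∀ u ∈ f.support, u.degree = d := by
  constructor
  · intro hf u hu
    by_contra hne
    exact MvPolynomial.mem_support_iff.mp hu (hf.coeff_eq_zero hne)
  · intro hf u hc
    rw [show ((Finsupp.weight 1) u : ℕ) = u.degree from by
      rw [Finsupp.degree_eq_weight_one]; rfl]
    exact hf u (MvPolynomial.mem_support_iff.mpr hc)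

theorem totalDegree_eq_sup_degree {σ : Type*} (p : MvPolynomial σ K) :
    p.totalDegree = p.support.sup Finsupp.degree := rfl

/-! ### Leading monomial basics -/

section LMsec

variable {σ : Type*} (m : MonomialOrder σ)

theorem toSyn_lm (f : MvPolynomial σ K) :
    m.toSyn (lm m f) = f.support.sup fun s => m.toSyn s := by
  rw [lm]; exact m.toSyn.apply_symm_apply _

theorem lm_mem {f : MvPolynomial σ K} (hf : f ≠ 0) : lm m f ∈ f.support := by
  obtain ⟨s, hs, hsup⟩ := Finset.exists_mem_eq_sup f.support
    (MvPolynomial.support_nonempty.mpr hf) (fun s => m.toSyn s)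
  rw [lm, hsup, AddEquiv.symm_apply_apply]
  exact hs

theorem toSyn_le_lm {f : MvPolynomial σ K} {s : σ →₀ ℕ} (hs : s ∈ f.support) :
    m.toSyn s ≤ m.toSyn (lm m f) := by
  rw [toSyn_lm]; exact Finset.le_sup hs

theorem lm_eq_of {f : MvPolynomial σ K} {s : σ →₀ ℕ} (hs : s ∈ f.support)
    (hmax : ∀ t ∈ f.support, m.toSyn t ≤ m.toSyn s) : lm m f = s := by
  have : m.toSyn (lm m f) = m.toSyn s :=
    le_antisymm (by rw [toSyn_lm]; exact Finset.sup_le hmax) (toSyn_le_lm m hs)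
  exact m.toSyn.injective this

theorem lm_monomial {u : σ →₀ ℕ} {c : K} (hc : c ≠ 0) :
    lm m (MvPolynomial.monomial u c) = u := by
  classical
  apply lm_eq_of
  · rw [MvPolynomial.support_monomial, if_neg hc]; exact Finset.mem_singleton_self u
  · intro t ht
    rw [MvPolynomial.support_monomial, if_neg hc, Finset.mem_singleton] at ht
    rw [ht]

theorem lm_X_mul {f : MvPolynomial σ K} (hf : f ≠ 0) (i : σ) :
    lm m (MvPolynomial.X i * f) = Finsupp.single i 1 + lm m f := by
  apply lm_eq_of
  · rw [MvPolynomial.support_X_mul]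
    exact Finset.mem_map_of_mem _ (lm_mem m hf)
  · intro t ht
    rw [MvPolynomial.support_X_mul, Finset.mem_map] at ht
    obtain ⟨t', ht', heq⟩ := ht
    rw [← heq, addLeftEmbedding_apply, map_add, map_add]
    exact add_le_add_right (toSyn_le_lm m ht') _

end LMsec

/-! ### `extX` and `restr` -/

section ER

variable {n : ℕ}

@[simp] theorem restr_apply (a : Fin (n + 1) →₀ ℕ) (i : Fin n) :
    restr a i = a i.castSucc := by
  simp [restr]

@[simp] theorem extX_castSucc (a : Fin n →₀ ℕ) (i : Fin n) :
    extX a i.castSucc = a i :=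
  Finsupp.embDomain_apply_self _ a i

@[simp] theorem extX_last (a : Fin n →₀ ℕ) : extX a (Fin.last n) = 0 := by
  apply Finsupp.embDomain_notin_range
  rintro ⟨i, hi⟩
  exact (Fin.castSucc_lt_last i).ne hi

theorem decomp (a : Fin (n + 1) →₀ ℕ) :
    a = extX (restr a) + Finsupp.single (Fin.last n) (a (Fin.last n)) := by
  ext j
  induction j using Fin.lastCases with
  | last => simp
  | cast i =>
    simp [Finsupp.single_apply, ((Fin.castSucc_lt_last i).ne).symm]

@[simp] theorem restr_extX (a : Fin n →₀ ℕ) : restr (extX a) = a := by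
  ext i; simp

theorem extX_restr {a : Fin (n + 1) →₀ ℕ} (ha : a (Fin.last n) = 0) :
    extX (restr a) = a := by
  conv_rhs => rw [decomp a]
  rw [ha, Finsupp.single_zero, add_zero]

theorem deg_extX (a : Fin n →₀ ℕ) : (extX a).degree = a.degree := by
  rw [extX, Finsupp.degree_apply, Finsupp.support_embDomain, Finset.sum_map, Finsupp.degree_apply]
  exact Finset.sum_congr rfl fun i _ => Finsupp.embDomain_apply_self _ _ _

theorem deg_decomp (a : Fin (n + 1) →₀ ℕ) :
    a.degree = (restr a).degree + a (Fin.last n) := by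
  conv_lhs => rw [decomp a]
  rw [deg_add, deg_extX, deg_single]

theorem extX_mono {a b : Fin n →₀ ℕ} (hab : a ≤ b) : extX a ≤ extX b := by
  rw [Finsupp.le_def]; intro j
  induction j using Fin.lastCases with
  | last => simp
  | cast i => simpa using hab i

end ER
end Aux
end GBPaper

namespace GBPaper

section Aux2

variable {K : Type*} [Field K] {n : ℕ}

/-- The substitution `y = 0` as a bundled algebra hom. -/
noncomputable def phiH (K : Type*) [Field K] (n : ℕ) :
    MvPolynomial (Fin (n + 1)) K →ₐ[K] MvPolynomial (Fin n) K :=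
  MvPolynomial.aeval (Fin.lastCases 0 fun i => MvPolynomial.X i)

theorem topPartR_eq (F : MvPolynomial (Fin (n + 1)) K) : topPartR F = phiH K n F := rfl

theorem topPartR_rename (p : MvPolynomial (Fin n) K) :
    topPartR (rename Fin.castSucc p) = p := by
  rw [topPartR, aeval_rename]
  have hco : (Fin.lastCases 0 fun i => (X i : MvPolynomial (Fin n) K)) ∘ Fin.castSucc
      = fun i => X i := by
    funext i
    simp
  rw [hco]
  exact aeval_X_left_apply p

theorem mapD_eq_extX (a : Fin n →₀ ℕ) :
    Finsupp.mapDomain Fin.castSucc a = extX a := by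
  rw [extX, Finsupp.embDomain_eq_mapDomain]
  rfl

theorem topPartR_monomial (u : Fin (n + 1) →₀ ℕ) (c : K) :
    topPartR (monomial u c) =
      if u (Fin.last n) = 0 then monomial (restr u) c else 0 := by
  split_ifs with hu
  · have hmon : monomial u c = rename Fin.castSucc (monomial (restr u) c) := by
      rw [rename_monomial, mapD_eq_extX, extX_restr hu]
    rw [hmon, topPartR_rename]
  · rw [topPartR, aeval_monomial, Finsupp.prod]
    apply mul_eq_zero_of_right
    apply Finset.prod_eq_zero (Finsupp.mem_support_iff.mpr hu)
    simp [zero_pow hu]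

theorem coeff_topPartR (F : MvPolynomial (Fin (n + 1)) K) (v : Fin n →₀ ℕ) :
    coeff v (topPartR F) = coeff (extX v) F := by
  induction F using MvPolynomial.induction_on' with
  | monomial u c =>
    rw [topPartR_monomial]
    split_ifs with hu
    · rw [coeff_monomial, coeff_monomial]
      by_cases hv : restr u = v
      · rw [if_pos hv, if_pos]
        rw [← hv, extX_restr hu]
      · rw [if_neg hv, if_neg]
        intro hh
        exact hv (by rw [hh, restr_extX])
    · rw [coeff_zero, coeff_monomial, if_neg]
      intro hh
      rw [hh] at hu
      simp at hu
  | add p q hp hq =>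
    rw [topPartR_eq, map_add, coeff_add, ← topPartR_eq p, ← topPartR_eq q, coeff_add, hp, hq]

theorem topPartR_isHomog {F : MvPolynomial (Fin (n + 1)) K} {d : ℕ}
    (hF : F.IsHomogeneous d) : (topPartR F).IsHomogeneous d := by
  rw [isHomog_iff] at hF ⊢
  intro u hu
  rw [MvPolynomial.mem_support_iff, coeff_topPartR] at hu
  have := hF _ (MvPolynomial.mem_support_iff.mpr hu)
  rwa [deg_extX] at this

theorem topPartR_homogComp (F : MvPolynomial (Fin (n + 1)) K) (e : ℕ) :
    topPartR (homogeneousComponent e F) = homogeneousComponent e (topPartR F) := by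
  ext v
  rw [coeff_topPartR, coeff_homogeneousComponent, coeff_homogeneousComponent, deg_extX,
    coeff_topPartR]

/-! ### Dividing by `y` -/

theorem exists_y_factor {F : MvPolynomial (Fin (n + 1)) K} {d : ℕ}
    (hF : F.IsHomogeneous d) (h0 : ∀ u ∈ F.support, u (Fin.last n) ≠ 0) :
    ∃ q : MvPolynomial (Fin (n + 1)) K, q.IsHomogeneous (d - 1) ∧
      F = X (Fin.last n) * q := by
  refine ⟨∑ u ∈ F.support, monomial (u - Finsupp.single (Fin.last n) 1) (coeff u F), ?_, ?_⟩
  · apply MvPolynomial.IsHomogeneous.sum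
    intro u hu
    apply isHomogeneous_monomial
    have hle : Finsupp.single (Fin.last n) 1 ≤ u :=
      Finsupp.single_le_iff.mpr (Nat.one_le_iff_ne_zero.mpr (h0 u hu))
    have h1 := congrArg Finsupp.degree (add_tsub_cancel_of_le hle)
    rw [deg_add, deg_single] at h1
    have h2 : u.degree = d := isHomog_iff.mp hF u hu
    omega
  · rw [Finset.mul_sum]
    conv_lhs => rw [F.as_sum]
    apply Finset.sum_congr rfl
    intro u hu
    have hle : Finsupp.single (Fin.last n) 1 ≤ u :=
      Finsupp.single_le_iff.mpr (Nat.one_le_iff_ne_zero.mpr (h0 u hu))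
    rw [show (X (Fin.last n) : MvPolynomial (Fin (n + 1)) K)
        = monomial (Finsupp.single (Fin.last n) 1) 1 from rfl,
      monomial_mul, one_mul, add_tsub_cancel_of_le hle]

/-! ### Upward closure -/

theorem Itop_up {T : Ideal (MvPolynomial (Fin n) K)} {e : ℕ}
    (he : ∀ g : MvPolynomial (Fin n) K, g.IsHomogeneous e → g ∈ T) :
    ∀ g : MvPolynomial (Fin n) K, g.IsHomogeneous (e + 1) → g ∈ T := by
  intro g hg
  rw [g.as_sum]
  apply Ideal.sum_mem
  intro u hu
  have hdeg : u.degree = e + 1 := isHomog_iff.mp hg u hu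
  have hne : u ≠ 0 := by
    intro h0
    rw [h0, map_zero] at hdeg
    omega
  obtain ⟨i, hi⟩ := Finsupp.support_nonempty_iff.mpr hne
  have hle : Finsupp.single i 1 ≤ u :=
    Finsupp.single_le_iff.mpr (Nat.one_le_iff_ne_zero.mpr (Finsupp.mem_support_iff.mp hi))
  have hsplit : monomial u (coeff u g) = X i * monomial (u - Finsupp.single i 1) (coeff u g) := by
    rw [show (X i : MvPolynomial (Fin n) K) = monomial (Finsupp.single i 1) 1 from rfl,
      monomial_mul, one_mul, add_tsub_cancel_of_le hle]
  rw [hsplit]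
  apply Ideal.mul_mem_left
  apply he
  apply isHomogeneous_monomial
  have h1 := congrArg Finsupp.degree (add_tsub_cancel_of_le hle)
  rw [deg_add, deg_single] at h1
  omega

theorem mem_of_isHomog_ge {T : Ideal (MvPolynomial (Fin n) K)} {e d : ℕ}
    (he : ∀ g : MvPolynomial (Fin n) K, g.IsHomogeneous e → g ∈ T) (hd : e ≤ d) :
    ∀ g : MvPolynomial (Fin n) K, g.IsHomogeneous d → g ∈ T := by
  induction d, hd using Nat.le_induction with
  | base => exact he
  | succ d hd ih => exact Itop_up ih

/-! ### Homogeneity of the ideal -/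

theorem homogComp_mul_mem {σ : Type*} {I : Ideal (MvPolynomial σ K)}
    {p : MvPolynomial σ K} {k : ℕ} (hpI : p ∈ I) (hk : p.IsHomogeneous k)
    (c : MvPolynomial σ K) (e : ℕ) :
    homogeneousComponent e (c * p) ∈ I := by
  have hcp : c * p = ∑ j ∈ Finset.range (c.totalDegree + 1), homogeneousComponent j c * p := by
    rw [← Finset.sum_mul, sum_homogeneousComponent]
  rw [hcp, map_sum]
  apply Ideal.sum_mem
  intro j _
  rw [homogeneousComponent_of_mem ((mem_homogeneousSubmodule _ _).mpr
    ((homogeneousComponent_isHomogeneous j c).mul hk))]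
  split_ifs
  · exact Ideal.mul_mem_left _ _ hpI
  · exact zero_mem _

theorem homogComp_mem_span {M : ℕ} {h : Fin M → MvPolynomial (Fin (n + 1)) K}
    {dg : Fin M → ℕ} (hhom : ∀ i, (h i).IsHomogeneous (dg i))
    {f : MvPolynomial (Fin (n + 1)) K} (hf : f ∈ Ideal.span (Set.range h)) (e : ℕ) :
    homogeneousComponent e f ∈ Ideal.span (Set.range h) := by
  rw [Ideal.mem_span_range_iff_exists_fun] at hf
  obtain ⟨c, rfl⟩ := hf
  rw [map_sum]
  exact Ideal.sum_mem _ fun i _ =>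
    homogComp_mul_mem (Ideal.subset_span (Set.mem_range_self i)) (hhom i) _ _

/-! ### Lifting from `I^top` to `I` -/

theorem lift_top {M : ℕ} {h : Fin M → MvPolynomial (Fin (n + 1)) K}
    {dg : Fin M → ℕ} (hhom : ∀ i, (h i).IsHomogeneous (dg i))
    {p : MvPolynomial (Fin n) K} {e : ℕ}
    (hp : p ∈ Ideal.span (Set.range fun i => topPartR (h i)))
    (he : p.IsHomogeneous e) :
    ∃ P ∈ Ideal.span (Set.range h), P.IsHomogeneous e ∧ topPartR P = p := by
  rw [Ideal.mem_span_range_iff_exists_fun] at hp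
  obtain ⟨c, hc⟩ := hp
  set P0 : MvPolynomial (Fin (n + 1)) K := ∑ i, rename Fin.castSucc (c i) * h i with hP0
  have hP0I : P0 ∈ Ideal.span (Set.range h) :=
    Ideal.sum_mem _ fun i _ => Ideal.mul_mem_left _ _ (Ideal.subset_span (Set.mem_range_self i))
  have htop : topPartR P0 = p := by
    rw [topPartR_eq, hP0, map_sum, ← hc]
    apply Finset.sum_congr rfl
    intro i _
    rw [map_mul]
    rw [show phiH K n (rename Fin.castSucc (c i)) = c i from topPartR_rename (c i)]
    rfl
  refine ⟨homogeneousComponent e P0, homogComp_mem_span hhom hP0I e,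
    homogeneousComponent_isHomogeneous e P0, ?_⟩
  rw [topPartR_homogComp, htop,
    homogeneousComponent_of_mem ((mem_homogeneousSubmodule _ _).mpr he), if_pos rfl]

/-! ### The `star` decomposition -/

theorem star_decomp {M : ℕ} {h : Fin M → MvPolynomial (Fin (n + 1)) K}
    {dg : Fin M → ℕ} (hhom : ∀ i, (h i).IsHomogeneous (dg i))
    {f : MvPolynomial (Fin (n + 1)) K} {d : ℕ} (hf : f.IsHomogeneous d)
    (hmem : topPartR f ∈ Ideal.span (Set.range fun i => topPartR (h i))) :
    ∃ P ∈ Ideal.span (Set.range h), ∃ q : MvPolynomial (Fin (n + 1)) K,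
      q.IsHomogeneous (d - 1) ∧ f = P + X (Fin.last n) * q := by
  obtain ⟨P, hPI, hPh, hPtop⟩ := lift_top hhom hmem (topPartR_isHomog hf)
  have hsub : (f - P).IsHomogeneous d := hf.sub hPh
  have htop0 : topPartR (f - P) = 0 := by
    rw [topPartR_eq, map_sub, ← topPartR_eq f, ← topPartR_eq P, hPtop, sub_self]
  have h0 : ∀ u ∈ (f - P).support, u (Fin.last n) ≠ 0 := by
    intro u hu hu0
    rw [MvPolynomial.mem_support_iff] at hu
    apply hu
    have hcf : coeff (restr u) (topPartR (f - P)) = coeff u (f - P) := by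
      rw [coeff_topPartR, extX_restr hu0]
    rw [← hcf, htop0, coeff_zero]
  obtain ⟨q, hq, hfq⟩ := exists_y_factor hsub h0
  refine ⟨P, hPI, q, hq, ?_⟩
  rw [← hfq]
  ring

end Aux2
end GBPaper

namespace GBPaper

section Aux3

variable {K : Type*} [Field K] {n : ℕ}

/-- The image of the degree-`d` piece in the quotient. -/
noncomputable def Vd (I : Ideal (MvPolynomial (Fin (n + 1)) K)) (d : ℕ) :
    Submodule K (MvPolynomial (Fin (n + 1)) K ⧸ I) :=
  (MvPolynomial.homogeneousSubmodule (Fin (n + 1)) K d).map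
    (Ideal.Quotient.mkₐ K I).toLinearMap

theorem hilbertFn_eq (I : Ideal (MvPolynomial (Fin (n + 1)) K)) (d : ℕ) :
    hilbertFn K I d = Module.finrank K (Vd I d) := rfl

theorem Vd_fin (I : Ideal (MvPolynomial (Fin (n + 1)) K)) (d : ℕ) :
    FiniteDimensional K (Vd I d) := by
  classical
  set s : Set (MvPolynomial (Fin (n + 1)) K) :=
    (fun u => (monomial u (1 : K))) '' {u : Fin (n + 1) →₀ ℕ | u.degree ≤ d} with hs
  have hsfin : s.Finite := (Finsupp.finite_of_degree_le d).image _
  have hle : MvPolynomial.homogeneousSubmodule (Fin (n + 1)) K d ≤ Submodule.span K s := by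
    intro p hp
    rw [mem_homogeneousSubmodule] at hp
    rw [p.as_sum]
    apply Submodule.sum_mem
    intro u hu
    have hmp : monomial u (coeff u p) = (coeff u p) • monomial u (1 : K) := by
      rw [smul_monomial, smul_eq_mul, mul_one]
    rw [hmp]
    exact Submodule.smul_mem _ _
      (Submodule.subset_span ⟨u, le_of_eq (isHomog_iff.mp hp u hu), rfl⟩)
  have hVle : Vd I d ≤ Submodule.span K ((Ideal.Quotient.mkₐ K I).toLinearMap '' s) := by
    rw [← Submodule.map_span]
    exact Submodule.map_mono hle
  have hfd : FiniteDimensional K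
      (Submodule.span K ((Ideal.Quotient.mkₐ K I).toLinearMap '' s)) :=
    FiniteDimensional.span_of_finite K (hsfin.image _)
  exact Submodule.finiteDimensional_of_le hVle

/-- Multiplication by the class of `y` on the quotient. -/
noncomputable def mulY (I : Ideal (MvPolynomial (Fin (n + 1)) K)) :
    (MvPolynomial (Fin (n + 1)) K ⧸ I) →ₗ[K] (MvPolynomial (Fin (n + 1)) K ⧸ I) :=
  LinearMap.mulLeft K (Ideal.Quotient.mkₐ K I (X (Fin.last n)))

theorem mulY_maps (I : Ideal (MvPolynomial (Fin (n + 1)) K)) (d : ℕ) :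
    ∀ x ∈ Vd I d, mulY I x ∈ Vd I (d + 1) := by
  rintro x ⟨p, hp, rfl⟩
  have hp' : p.IsHomogeneous d := hp
  refine ⟨X (Fin.last n) * p, ?_, ?_⟩
  · show (X (Fin.last n) * p).IsHomogeneous (d + 1)
    simpa [add_comm] using (isHomogeneous_X K (Fin.last n)).mul hp'
  · show Ideal.Quotient.mkₐ K I (X (Fin.last n) * p) = mulY I (Ideal.Quotient.mkₐ K I p)
    rw [mulY, LinearMap.mulLeft_apply, map_mul]

theorem L_surj (I : Ideal (MvPolynomial (Fin (n + 1)) K)) (d : ℕ)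
    (hstar : ∀ f : MvPolynomial (Fin (n + 1)) K, f.IsHomogeneous (d + 1) →
      ∃ P ∈ I, ∃ q : MvPolynomial (Fin (n + 1)) K,
        q.IsHomogeneous d ∧ f = P + X (Fin.last n) * q) :
    Function.Surjective ((mulY I).restrict (mulY_maps I d)) := by
  rintro ⟨x, hx⟩
  obtain ⟨p, hp, rfl⟩ := hx
  obtain ⟨P, hPI, q, hq, hpq⟩ := hstar p ((mem_homogeneousSubmodule _ _).mp hp)
  refine ⟨⟨Ideal.Quotient.mkₐ K I q,
    Submodule.mem_map.mpr ⟨q, (mem_homogeneousSubmodule _ _).mpr hq, rfl⟩⟩, ?_⟩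
  apply Subtype.ext
  rw [LinearMap.restrict_apply]
  show mulY I (Ideal.Quotient.mkₐ K I q) = _
  rw [mulY, LinearMap.mulLeft_apply, ← map_mul]
  show _ = Ideal.Quotient.mkₐ K I p
  rw [hpq, map_add, Ideal.Quotient.mkₐ_eq_mk,
    Ideal.Quotient.eq_zero_iff_mem.mpr hPI, zero_add]

theorem mem_of_mulY (I : Ideal (MvPolynomial (Fin (n + 1)) K)) {d : ℕ}
    (hfr : Module.finrank K (Vd I d) = Module.finrank K (Vd I (d + 1)))
    (hsurj : Function.Surjective ((mulY I).restrict (mulY_maps I d)))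
    {f : MvPolynomial (Fin (n + 1)) K} (hf : f.IsHomogeneous d)
    (hyf : X (Fin.last n) * f ∈ I) : f ∈ I := by
  haveI := Vd_fin I d
  haveI := Vd_fin I (d + 1)
  have hinj : Function.Injective ((mulY I).restrict (mulY_maps I d)) :=
    (LinearMap.injective_iff_surjective_of_finrank_eq_finrank hfr).mpr hsurj
  set x : Vd I d := ⟨Ideal.Quotient.mkₐ K I f,
    Submodule.mem_map.mpr ⟨f, (mem_homogeneousSubmodule _ _).mpr hf, rfl⟩⟩ with hxdef
  have h0 : ((mulY I).restrict (mulY_maps I d)) x = 0 := by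
    apply Subtype.ext
    rw [LinearMap.restrict_apply]
    show mulY I (Ideal.Quotient.mkₐ K I f) = 0
    rw [mulY, LinearMap.mulLeft_apply, ← map_mul, Ideal.Quotient.mkₐ_eq_mk,
      Ideal.Quotient.eq_zero_iff_mem]
    exact hyf
  have hx0 : x = 0 := hinj (by rw [h0, map_zero])
  have hval : Ideal.Quotient.mkₐ K I f = 0 := by
    have := congrArg (Subtype.val) hx0
    exact this
  rw [Ideal.Quotient.mkₐ_eq_mk, Ideal.Quotient.eq_zero_iff_mem] at hval
  exact hval

/-! ### Leading monomial of an element with nonzero top part -/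

theorem lm_top (m' : MonomialOrder (Fin (n + 1))) (m₀ : MonomialOrder (Fin n))
    (hm₀ : MonIsGraded m₀) (hm' : IsHomogenizationOrder m' m₀)
    {P : MvPolynomial (Fin (n + 1)) K} {e : ℕ} (hP : P.IsHomogeneous e)
    (hzero : topPartR P ≠ 0) :
    lm m' P = extX (lm m₀ (topPartR P)) := by
  have hs0 : lm m₀ (topPartR P) ∈ (topPartR P).support := lm_mem m₀ hzero
  have hdeg0 : (lm m₀ (topPartR P)).degree = e :=
    isHomog_iff.mp (topPartR_isHomog hP) _ hs0
  have hmemP : extX (lm m₀ (topPartR P)) ∈ P.support := by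
    rw [MvPolynomial.mem_support_iff, ← coeff_topPartR]
    exact MvPolynomial.mem_support_iff.mp hs0
  apply lm_eq_of
  · exact hmemP
  · intro t ht
    have hdegt : t.degree = e := isHomog_iff.mp hP t ht
    have hdegE : (extX (lm m₀ (topPartR P))).degree = e := by rw [deg_extX, hdeg0]
    by_cases hlast : t (Fin.last n) = 0
    · have hrt : restr t ∈ (topPartR P).support := by
        rw [MvPolynomial.mem_support_iff, coeff_topPartR, extX_restr hlast]
        exact MvPolynomial.mem_support_iff.mp ht
      have hle := toSyn_le_lm m₀ hrt
      by_contra hcon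
      rw [not_le] at hcon
      rcases (hm' _ _).mp hcon with hd | ⟨_, hlt⟩
      · rw [hdegE, hdegt] at hd
        exact lt_irrefl _ hd
      · rw [restr_extX] at hlt
        exact absurd hle (not_le.mpr hlt)
    · apply le_of_lt
      apply (hm' _ _).mpr
      right
      refine ⟨by rw [hdegt, hdegE], ?_⟩
      rw [restr_extX]
      apply hm₀
      have h2 := deg_decomp t
      rw [hdegt] at h2
      rw [hdeg0]
      omega

end Aux3
end GBPaper

open GBPaper

/-- if `R'/⟨H,y⟩ ≅ R/⟨H^top⟩` is Artinian with `D = d_reg(⟨H^top⟩)`,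
the generalized degree of regularity `D'` of `⟨H⟩` is finite, and `D' ≥ D`, then
the reduced Gröbner basis of `⟨H⟩` w.r.t. any homogenized graded monomial ordering
lives in degrees `≤ D'`. -/
theorem stmt6 {K : Type*} [Field K] {n M : ℕ}
    (h : Fin M → MvPolynomial (Fin (n + 1)) K) (dg : Fin M → ℕ)
    (hhom : ∀ i, (h i).IsHomogeneous (dg i))
    (hArt : ∃ d : ℕ, ∀ g : MvPolynomial (Fin n) K, g.IsHomogeneous d →
      g ∈ Ideal.span (Set.range fun i => topPartR (h i)))
    (hfin : {d₀ : ℕ | ∀ d : ℕ, d₀ ≤ d →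
        hilbertFn K (Ideal.span (Set.range h)) d =
          hilbertFn K (Ideal.span (Set.range h)) d₀}.Nonempty)
    (hDD' : degReg K (Ideal.span (Set.range fun i => topPartR (h i))) ≤
      gdegReg K (Ideal.span (Set.range h)))
    (m' : MonomialOrder (Fin (n + 1))) (m₀ : MonomialOrder (Fin n))
    (hm₀ : MonIsGraded m₀) (hm' : IsHomogenizationOrder m' m₀)
    (G : Finset (MvPolynomial (Fin (n + 1)) K))
    (hG : IsReducedGB m' (Ideal.span (Set.range h)) G) :
    ∀ g ∈ G, g.totalDegree ≤ gdegReg K (Ideal.span (Set.range h)) := by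
  intro g hg
  set I := Ideal.span (Set.range h) with hI
  set Itop := Ideal.span (Set.range fun i => topPartR (h i)) with hItop
  set D := degReg K Itop with hDdef
  set D' := gdegReg K I with hD'def
  by_contra hcon
  rw [not_le] at hcon
  set d := g.totalDegree with hd
  -- basic facts
  have hgne : g ≠ 0 := fun h0 => hG.zero_not_mem (h0 ▸ hg)
  have hgI : g ∈ I := hG.subset hg
  -- D is a regular degree and the set of such degrees is upward closed
  have hDmem : ∀ p : MvPolynomial (Fin n) K, p.IsHomogeneous D → p ∈ Itop := by
    have := Nat.sInf_mem hArt
    exact this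
  have hDle : ∀ {e : ℕ}, D ≤ e →
      ∀ p : MvPolynomial (Fin n) K, p.IsHomogeneous e → p ∈ Itop :=
    fun he => mem_of_isHomog_ge hDmem he
  -- the Hilbert function is constant from D' on
  have hHF : ∀ e : ℕ, D' ≤ e → hilbertFn K I e = hilbertFn K I D' := by
    have := Nat.sInf_mem hfin
    exact this
  -- the star decomposition
  have hstar : ∀ e : ℕ, D ≤ e → ∀ f : MvPolynomial (Fin (n + 1)) K, f.IsHomogeneous e →
      ∃ P ∈ I, ∃ q : MvPolynomial (Fin (n + 1)) K,
        q.IsHomogeneous (e - 1) ∧ f = P + MvPolynomial.X (Fin.last n) * q := by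
    intro e he f hf
    exact star_decomp hhom hf (hDle he _ (topPartR_isHomog hf))
  -- the injectivity consequence
  have hdag : ∀ e : ℕ, D' ≤ e → ∀ f : MvPolynomial (Fin (n + 1)) K, f.IsHomogeneous e →
      MvPolynomial.X (Fin.last n) * f ∈ I → f ∈ I := by
    intro e he f hf hyf
    refine mem_of_mulY I ?_ ?_ hf hyf
    · have h1 := hHF e he
      have h2 := hHF (e + 1) (le_trans he (Nat.le_succ e))
      rw [hilbertFn_eq, hilbertFn_eq] at h1 h2
      exact h1.trans h2.symm
    · apply L_surj
      intro f' hf'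
      obtain ⟨P, h1, q, h3, h4⟩ := hstar (e + 1)
        (le_trans hDD' (le_trans he (Nat.le_succ e))) f' hf'
      exact ⟨P, h1, q, by simpa using h3, h4⟩
  -- the top homogeneous component of g
  set f := MvPolynomial.homogeneousComponent d g with hfdef
  have hfhom : f.IsHomogeneous d := MvPolynomial.homogeneousComponent_isHomogeneous d g
  have hfI : f ∈ I := homogComp_mem_span hhom hgI d
  obtain ⟨u0, hu0, hu0d⟩ := Finset.exists_mem_eq_sup g.support
    (MvPolynomial.support_nonempty.mpr hgne) Finsupp.degree
  have hu0deg : u0.degree = d := by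
    rw [hd, totalDegree_eq_sup_degree, hu0d]
  have hfne : f ≠ 0 := by
    intro h0
    have hc0 : MvPolynomial.coeff u0 f = 0 := by rw [h0, MvPolynomial.coeff_zero]
    rw [hfdef, MvPolynomial.coeff_homogeneousComponent, if_pos hu0deg] at hc0
    exact MvPolynomial.mem_support_iff.mp hu0 hc0
  have hsupf : f.support ⊆ g.support := by
    intro u hu
    rw [MvPolynomial.mem_support_iff] at hu ⊢
    intro h0
    apply hu
    rw [hfdef, MvPolynomial.coeff_homogeneousComponent, h0, ite_self]
  -- leading monomials
  have hm'g : MonIsGraded m' := fun a b hab => (hm' a b).mpr (Or.inl hab)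
  have hlmf_mem : lm m' f ∈ f.support := lm_mem m' hfne
  have hlmf_deg : (lm m' f).degree = d := isHomog_iff.mp hfhom _ hlmf_mem
  have hlmg_deg : (lm m' g).degree = d := by
    have h1 : (lm m' g).degree ≤ d := by
      rw [hd, totalDegree_eq_sup_degree]
      exact Finset.le_sup (lm_mem m' hgne)
    have h2 : ¬ (lm m' g).degree < u0.degree := fun hlt =>
      absurd (toSyn_le_lm m' hu0) (not_le.mpr (hm'g _ _ hlt))
    omega
  by_cases hcase : (lm m' f) (Fin.last n) = 0
  · -- Case B : the leading monomial of `f` is free of `y`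
    have hrne : restr (lm m' f) ≠ 0 := by
      intro h0
      have hdd := deg_decomp (lm m' f)
      rw [hlmf_deg, hcase, h0, map_zero] at hdd
      omega
    obtain ⟨i0, hi0⟩ := Finsupp.support_nonempty_iff.mpr hrne
    have hle : Finsupp.single i0 1 ≤ restr (lm m' f) :=
      Finsupp.single_le_iff.mpr (Nat.one_le_iff_ne_zero.mpr (Finsupp.mem_support_iff.mp hi0))
    set b := restr (lm m' f) - Finsupp.single i0 1 with hb
    have hbdeg : b.degree = d - 1 := by
      have h1 := congrArg Finsupp.degree (add_tsub_cancel_of_le hle)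
      rw [deg_add, deg_single] at h1
      rw [← hb] at h1
      have h2 := deg_decomp (lm m' f)
      rw [hlmf_deg, hcase] at h2
      omega
    have hmono : (MvPolynomial.monomial b (1 : K)).IsHomogeneous (d - 1) :=
      MvPolynomial.isHomogeneous_monomial _ hbdeg
    have hmonoI : (MvPolynomial.monomial b (1 : K)) ∈ Itop := hDle (by omega) _ hmono
    obtain ⟨P, hPI, hPh, hPtop⟩ := lift_top hhom hmonoI hmono
    have hPtopne : topPartR P ≠ 0 := by
      rw [hPtop]
      intro hh
      exact one_ne_zero (MvPolynomial.monomial_eq_zero.mp hh)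
    have hPne : P ≠ 0 := by
      intro h0
      apply hPtopne
      rw [h0, topPartR_eq, map_zero]
    have hlmP : lm m' P = extX b := by
      rw [lm_top m' m₀ hm₀ hm' hPh hPtopne, hPtop, lm_monomial m₀ one_ne_zero]
    obtain ⟨g', hg'G, hg'le⟩ := hG.isGB P hPI hPne
    rw [hlmP] at hg'le
    have hleu : extX b ≤ lm m' f := by
      calc extX b ≤ extX (restr (lm m' f)) := extX_mono tsub_le_self
      _ = lm m' f := extX_restr hcase
    have hg'f : lm m' g' ≤ lm m' f := le_trans hg'le hleu
    have hg'deg : (lm m' g').degree ≤ d - 1 := by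
      calc (lm m' g').degree ≤ (extX b).degree := deg_mono hg'le
      _ = d - 1 := by rw [deg_extX, hbdeg]
    have hne' : g ≠ g' := by
      intro h0
      rw [← h0, hlmg_deg] at hg'deg
      omega
    exact hG.reduced g hg g' hg'G hne' (lm m' f) (hsupf hlmf_mem) hg'f
  · -- Case A : `y` divides the leading monomial of `f`, hence all of `f`
    have hall : ∀ t ∈ f.support, t (Fin.last n) ≠ 0 := by
      intro t ht h0
      have hdegt : t.degree = d := isHomog_iff.mp hfhom t ht
      have hlt : m'.toSyn (lm m' f) < m'.toSyn t := by
        apply (hm' _ _).mpr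
        right
        refine ⟨by rw [hlmf_deg, hdegt], ?_⟩
        apply hm₀
        have h1 := deg_decomp (lm m' f)
        have h2 := deg_decomp t
        rw [hlmf_deg] at h1
        rw [hdegt, h0] at h2
        omega
      exact absurd (toSyn_le_lm m' ht) (not_le.mpr hlt)
    obtain ⟨q, hqhom, hfq⟩ := exists_y_factor hfhom hall
    have hqne : q ≠ 0 := by
      intro h0
      rw [h0, mul_zero] at hfq
      exact hfne hfq
    have hqI : q ∈ I := hdag (d - 1) (by omega) q hqhom (by rw [← hfq]; exact hfI)
    obtain ⟨g', hg'G, hg'le⟩ := hG.isGB q hqI hqne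
    have hlmfq : lm m' f = Finsupp.single (Fin.last n) 1 + lm m' q := by
      rw [hfq]
      exact lm_X_mul m' hqne (Fin.last n)
    have hg'f : lm m' g' ≤ lm m' f := le_trans hg'le (by rw [hlmfq]; exact le_add_self)
    have hlmq_deg : (lm m' q).degree = d - 1 := isHomog_iff.mp hqhom _ (lm_mem m' hqne)
    have hg'deg : (lm m' g').degree ≤ d - 1 := by
      rw [← hlmq_deg]
      exact deg_mono hg'le
    have hne' : g ≠ g' := by
      intro h0
      rw [← h0, hlmg_deg] at hg'deg
      omega
    exact hG.reduced g hg g' hg'G hne' (lm m' f) (hsupf hlmf_mem) hg'f
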